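/- arXiv:1501.07260 — 5 statements merged into one kernel-verified Lean document; each statement's English description precedes it below -/
import Mathlib

section
/- Fix an integer n ≥ 1 and a constant M ≥ 0. For each integer L ≥ 1 let f_L : (Fin n → Fin L) → ℂ and, for each j ∈ Fin n, let g_{L,j} : Fin L → ℂ, with |f_L(ℓ)| ≤ M for every tuple ℓ and |g_{L,j}(m)| ≤ M for every m. Assume the cluster decomposition property: for every ε > 0 there exist ξ ∈ ℕ and L₀ ∈ ℕ such that for all L ≥ L₀ and all tuples ℓ : Fin n → Fin L whose entries are pairwise farther apart than ξ (i.e. |(ℓ i : ℤ) − (ℓ j : ℤ)| > ξ for all i ≠ j), one has |f_L(ℓ) − ∏_{j} g_{L,j}(ℓ j)| ≤ ε. Then lim_{L→∞} ( L^{−n} · ∑_{ℓ : Fin n → Fin L} f_L(ℓ) − ∏_{j ∈ Fin n} ( L^{−1} · ∑_{m ∈ Fin L} g_{L,j}(m) ) ) = 0. -/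
open Filter Finset

lemma pair_count (n L ξ : ℕ) (i j : Fin n) (hij : i ≠ j) :
    (Finset.univ.filter (fun ℓ : Fin n → Fin L => |(ℓ i : ℤ) - (ℓ j : ℤ)| ≤ ξ)).card
      ≤ (2 * ξ + 1) * L ^ (n - 1) := by
  classical
  have hcard : Fintype.card {k : Fin n // k ≠ j} = n - 1 := by
    have := Fintype.card_subtype_compl (fun k : Fin n => k = j)
    simp [Fintype.card_subtype_eq] at this
    simpa using this
  have hfun : Fintype.card ({k : Fin n // k ≠ j} → Fin L) = L ^ (n - 1) := by
    rw [Fintype.card_fun, Fintype.card_fin, hcard]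
  have hIcc : (Finset.Icc (-(ξ:ℤ)) ξ).card = 2 * ξ + 1 := by
    rw [Int.card_Icc]; omega
  have key : (Finset.univ.filter (fun ℓ : Fin n → Fin L => |(ℓ i : ℤ) - (ℓ j : ℤ)| ≤ ξ)).card
      ≤ ((Finset.univ : Finset ({k : Fin n // k ≠ j} → Fin L)) ×ˢ Finset.Icc (-(ξ:ℤ)) ξ).card := by
    apply Finset.card_le_card_of_injOn
      (fun ℓ => ((fun k => ℓ k.1), (ℓ j : ℤ) - (ℓ i : ℤ)))
    · intro ℓ hℓ
      simp only [Finset.mem_coe, Finset.mem_filter] at hℓ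
      simp only [Finset.mem_coe, Finset.mem_product, Finset.mem_univ, true_and, Finset.mem_Icc]
      have h2 := hℓ.2
      rw [abs_sub_comm] at h2
      have := abs_le.mp h2
      constructor <;> linarith [this.1, this.2]
    · intro ℓ hℓ ℓ' hℓ' h
      simp only [Prod.mk.injEq] at h
      have h1 : ∀ k : Fin n, k ≠ j → ℓ k = ℓ' k := fun k hk => congrFun h.1 ⟨k, hk⟩
      have hi : ℓ i = ℓ' i := h1 i hij
      have hj : ℓ j = ℓ' j := by
        have h2 := h.2
        rw [hi] at h2
        have : (ℓ j : ℤ) = (ℓ' j : ℤ) := by linarith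
        exact Fin.ext (by exact_mod_cast this)
      funext k
      by_cases hk : k = j
      · rw [hk]; exact hj
      · exact h1 k hk
  refine key.trans (le_of_eq ?_)
  rw [Finset.card_product, Finset.card_univ, hfun, hIcc, mul_comm]

/-- Cluster decomposition implies factorisation of the expectation value per unit length
of a product of extensive operators (Lemma 1 of the paper, correlation-function form). -/
theorem cluster_factorisation
    (n : ℕ) (hn : 1 ≤ n) (M : ℝ) (hM : 0 ≤ M)
    (f : (L : ℕ) → (Fin n → Fin L) → ℂ)
    (g : (L : ℕ) → Fin n → Fin L → ℂ)
    (hf : ∀ (L : ℕ), 1 ≤ L → ∀ ℓ : Fin n → Fin L, ‖f L ℓ‖ ≤ M)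
    (hg : ∀ (L : ℕ), 1 ≤ L → ∀ (j : Fin n) (m : Fin L), ‖g L j m‖ ≤ M)
    (hcluster : ∀ ε : ℝ, 0 < ε → ∃ (ξ : ℕ) (L₀ : ℕ), ∀ L : ℕ, L₀ ≤ L →
      ∀ ℓ : Fin n → Fin L,
        (∀ i j : Fin n, i ≠ j → (ξ : ℤ) < |(ℓ i : ℤ) - (ℓ j : ℤ)|) →
        ‖f L ℓ - ∏ j : Fin n, g L j (ℓ j)‖ ≤ ε) :
    Tendsto (fun L : ℕ =>
        (1 / (L : ℂ) ^ n) * ∑ ℓ : Fin n → Fin L, f L ℓ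
          - ∏ j : Fin n, ((1 / (L : ℂ)) * ∑ m : Fin L, g L j m))
      atTop (nhds 0) := by
  classical
  rw [NormedAddCommGroup.tendsto_nhds_zero]
  intro ε hε
  obtain ⟨ξ, L₀, hcl⟩ := hcluster (ε/2) (by linarith)
  set K : ℝ := (M + M^n) * ((n^2) * (2*ξ+1)) with hKdef
  have hK : 0 ≤ K := by positivity
  have htend : Tendsto (fun L : ℕ => K / L) atTop (nhds 0) :=
    tendsto_const_div_atTop_nhds_zero_nat K
  have hev : ∀ᶠ L : ℕ in atTop, K / L < ε/2 :=
    htend.eventually (gt_mem_nhds (by linarith))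
  filter_upwards [hev, eventually_ge_atTop L₀, eventually_ge_atTop 1] with L hKL hL₀ hL1
  have hLpos : (0:ℝ) < (L:ℝ) := by exact_mod_cast hL1
  have hLnpos : (0:ℝ) < (L:ℝ)^n := pow_pos hLpos n
  -- rewrite the product of averages as a normalized big sum
  have hprod : (∏ j : Fin n, ((1 / (L : ℂ)) * ∑ m : Fin L, g L j m))
      = (1 / (L : ℂ) ^ n) * ∑ ℓ : Fin n → Fin L, ∏ j : Fin n, g L j (ℓ j) := by
    rw [Finset.prod_mul_distrib, Finset.prod_const, Finset.card_univ, Fintype.card_fin,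
      Finset.prod_univ_sum]
    simp [Fintype.piFinset_univ, div_pow]
  rw [hprod, ← mul_sub, ← Finset.sum_sub_distrib]
  -- norm estimates
  have hnorm1 : ‖(1 / (L : ℂ) ^ n)‖ = 1 / (L:ℝ)^n := by
    simp [norm_div, norm_pow]
  rw [norm_mul, hnorm1]
  set P : (Fin n → Fin L) → ℂ := fun ℓ => ∏ j : Fin n, g L j (ℓ j) with hP
  set bad : Finset (Fin n → Fin L) :=
    Finset.univ.filter (fun ℓ => ∃ i j : Fin n, i ≠ j ∧ |(ℓ i : ℤ) - (ℓ j : ℤ)| ≤ ξ) with hbad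
  have hbadcard : bad.card ≤ n^2 * ((2*ξ+1) * L^(n-1)) := by
    have hsub : bad ⊆ (Finset.univ.offDiag).biUnion
        (fun p : Fin n × Fin n =>
          Finset.univ.filter (fun ℓ : Fin n → Fin L => |(ℓ p.1 : ℤ) - (ℓ p.2 : ℤ)| ≤ ξ)) := by
      intro ℓ hℓ
      simp only [hbad, Finset.mem_filter, Finset.mem_univ, true_and] at hℓ
      obtain ⟨i, j, hij, habs⟩ := hℓ
      exact Finset.mem_biUnion.mpr ⟨(i, j),
        Finset.mem_offDiag.mpr ⟨Finset.mem_univ _, Finset.mem_univ _, hij⟩,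
        Finset.mem_filter.mpr ⟨Finset.mem_univ _, habs⟩⟩
    calc bad.card ≤ _ := Finset.card_le_card hsub
      _ ≤ ∑ p ∈ Finset.univ.offDiag,
            (Finset.univ.filter
              (fun ℓ : Fin n → Fin L => |(ℓ p.1 : ℤ) - (ℓ p.2 : ℤ)| ≤ ξ)).card :=
          Finset.card_biUnion_le
      _ ≤ ∑ _p ∈ (Finset.univ : Finset (Fin n)).offDiag, (2*ξ+1) * L^(n-1) := by
          apply Finset.sum_le_sum
          intro p hp
          have hij : p.1 ≠ p.2 := (Finset.mem_offDiag.mp hp).2.2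
          exact pair_count n L ξ p.1 p.2 hij
      _ ≤ n^2 * ((2*ξ+1) * L^(n-1)) := by
          rw [Finset.sum_const, smul_eq_mul]
          apply Nat.mul_le_mul_right
          calc (Finset.univ : Finset (Fin n)).offDiag.card
              ≤ n * n := by
                rw [Finset.offDiag_card, Finset.card_univ, Fintype.card_fin]
                exact Nat.sub_le _ _
            _ = n^2 := (sq n).symm
  -- per-term bounds
  have hterm_bad : ∀ ℓ : Fin n → Fin L, ‖f L ℓ - P ℓ‖ ≤ M + M^n := by
    intro ℓ
    calc ‖f L ℓ - P ℓ‖ ≤ ‖f L ℓ‖ + ‖P ℓ‖ := norm_sub_le _ _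
      _ ≤ M + M^n := by
        gcongr
        · exact hf L hL1 ℓ
        · rw [hP]
          calc ‖∏ j : Fin n, g L j (ℓ j)‖ = ∏ j : Fin n, ‖g L j (ℓ j)‖ := norm_prod _ _
            _ ≤ ∏ _j : Fin n, M := Finset.prod_le_prod (fun _ _ => norm_nonneg _)
                (fun j _ => hg L hL1 j (ℓ j))
            _ = M^n := by simp
  have hterm_good : ∀ ℓ : Fin n → Fin L, ℓ ∉ bad → ‖f L ℓ - P ℓ‖ ≤ ε/2 := by
    intro ℓ hℓ
    simp only [hbad, Finset.mem_filter, Finset.mem_univ, true_and] at hℓ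
    push_neg at hℓ
    exact hcl L hL₀ ℓ hℓ
  -- cast bounds
  have hb' : ((bad.card : ℝ)) ≤ (n:ℝ)^2 * ((2*(ξ:ℝ)+1) * (L:ℝ)^(n-1)) := by
    exact_mod_cast hbadcard
  have hc' : (((badᶜ : Finset (Fin n → Fin L)).card : ℝ)) ≤ (L:ℝ)^n := by
    have h1 : (badᶜ : Finset (Fin n → Fin L)).card ≤ L^n := by
      have := Finset.card_le_univ (badᶜ : Finset (Fin n → Fin L))
      simpa [Finset.card_univ, Fintype.card_fun, Fintype.card_fin] using this
    exact_mod_cast h1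
  have hbsum : ∑ ℓ ∈ bad, ‖f L ℓ - P ℓ‖ ≤ (bad.card : ℝ) * (M + M^n) := by
    have h := Finset.sum_le_card_nsmul bad (fun ℓ => ‖f L ℓ - P ℓ‖) (M + M^n)
      (fun ℓ _ => hterm_bad ℓ)
    rwa [nsmul_eq_mul] at h
  have hgsum : ∑ ℓ ∈ (badᶜ : Finset (Fin n → Fin L)), ‖f L ℓ - P ℓ‖
      ≤ ((badᶜ : Finset (Fin n → Fin L)).card : ℝ) * (ε/2) := by
    have h := Finset.sum_le_card_nsmul (badᶜ : Finset (Fin n → Fin L))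
      (fun ℓ => ‖f L ℓ - P ℓ‖) (ε/2) (fun ℓ hℓ => hterm_good ℓ (Finset.mem_compl.mp hℓ))
    rwa [nsmul_eq_mul] at h
  have hsum : ‖∑ ℓ : Fin n → Fin L, (f L ℓ - P ℓ)‖
      ≤ (L:ℝ)^n * (ε/2) + (M + M^n) * ((n:ℝ)^2 * ((2*(ξ:ℝ)+1) * (L:ℝ)^(n-1))) := by
    calc ‖∑ ℓ : Fin n → Fin L, (f L ℓ - P ℓ)‖
        ≤ ∑ ℓ : Fin n → Fin L, ‖f L ℓ - P ℓ‖ := norm_sum_le _ _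
      _ = ∑ ℓ ∈ bad, ‖f L ℓ - P ℓ‖ + ∑ ℓ ∈ (badᶜ : Finset (Fin n → Fin L)), ‖f L ℓ - P ℓ‖ :=
          (Finset.sum_add_sum_compl bad _).symm
      _ ≤ (bad.card : ℝ) * (M + M^n) + ((badᶜ : Finset (Fin n → Fin L)).card : ℝ) * (ε/2) :=
          add_le_add hbsum hgsum
      _ ≤ ((n:ℝ)^2 * ((2*(ξ:ℝ)+1) * (L:ℝ)^(n-1))) * (M + M^n) + (L:ℝ)^n * (ε/2) :=
          add_le_add (mul_le_mul_of_nonneg_right hb' (by positivity))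
            (mul_le_mul_of_nonneg_right hc' (by linarith))
      _ = (L:ℝ)^n * (ε/2) + (M + M^n) * ((n:ℝ)^2 * ((2*(ξ:ℝ)+1) * (L:ℝ)^(n-1))) := by ring
  have hpow : (L:ℝ)^n = (L:ℝ)^(n-1) * L := by
    rw [← pow_succ]
    congr 1
    omega
  have hL1' : (L:ℝ) ≠ 0 := ne_of_gt hLpos
  have hLn1 : (L:ℝ)^(n-1) ≠ 0 := by positivity
  calc (1 / (L:ℝ)^n) * ‖∑ ℓ : Fin n → Fin L, (f L ℓ - P ℓ)‖
      ≤ (1 / (L:ℝ)^n) * ((L:ℝ)^n * (ε/2) + (M + M^n) * ((n:ℝ)^2 * ((2*(ξ:ℝ)+1) * (L:ℝ)^(n-1)))) :=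
        mul_le_mul_of_nonneg_left hsum (by positivity)
    _ = ε/2 + K / L := by
        rw [hKdef, hpow]
        field_simp
    _ < ε := by linarith
end

section
/- Let γ, k ∈ ℝ, write c = cos(k/2), s = sin(k/2), and assume ε² := c² + γ² s² > 0. Let σ^x, σ^y, σ^z be the Pauli matrices, E(a) the diagonal 2×2 matrix diag(e^{ia}, e^{−ia}) (so E(a) = e^{i a σ^z}), and define the 4×4 complex matrix 𝓗 = −(σ^x · E(k/2)) ⊗ (σ^y · (c·1 + iγ s·σ^z)) (Kronecker product). Then: (i) 𝓗² = ε² • 1₄; and (ii) for every 4×4 complex matrix O, lim_{T→∞} (1/T) ∫₀^T exp(i t 𝓗) · O · exp(−i t 𝓗) dt = (1/2) O + (1/(2ε²)) 𝓗 O 𝓗. -/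
open Filter Matrix Complex
open scoped Matrix Kronecker

attribute [local instance] Matrix.normedAddCommGroup Matrix.normedSpace

noncomputable def σx : Matrix (Fin 2) (Fin 2) ℂ := !![0, 1; 1, 0]
noncomputable def σy : Matrix (Fin 2) (Fin 2) ℂ := !![0, -Complex.I; Complex.I, 0]
noncomputable def σz : Matrix (Fin 2) (Fin 2) ℂ := !![1, 0; 0, -1]

/-- `Emat a = e^{i a σ^z} = diag(e^{ia}, e^{-ia})`. -/
noncomputable def Emat (a : ℝ) : Matrix (Fin 2) (Fin 2) ℂ :=
  !![Complex.exp (Complex.I * (a : ℂ)), 0; 0, Complex.exp (-(Complex.I * (a : ℂ)))]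

section Aux

variable {N : Type*} [Fintype N] [DecidableEq N]

/-- Powers of a matrix squaring to `ε² • 1`. -/
lemma aux_pow_even (H : Matrix N N ℂ) (ε : ℝ) (hH : H * H = ((ε : ℂ) ^ 2) • 1) (m : ℕ) :
    H ^ (2 * m) = ((ε : ℂ) ^ (2 * m)) • 1 := by
  rw [pow_mul, sq, hH, smul_pow, one_pow, ← pow_mul]

lemma aux_pow_odd (H : Matrix N N ℂ) (ε : ℝ) (hH : H * H = ((ε : ℂ) ^ 2) • 1) (m : ℕ) :
    H ^ (2 * m + 1) = ((ε : ℂ) ^ (2 * m)) • H := by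
  rw [pow_succ, aux_pow_even H ε hH, smul_mul, one_mul]

/-- Closed form of the exponential of `(I t) • H` for `H` with `H² = ε² • 1`. -/
lemma exp_smul_of_sq (H : Matrix N N ℂ) (ε : ℝ) (hε : ε ≠ 0)
    (hH : H * H = ((ε : ℂ) ^ 2) • 1) (t : ℝ) :
    NormedSpace.exp ((Complex.I * (t : ℂ)) • H) =
      ((Real.cos (t * ε) : ℝ) : ℂ) • (1 : Matrix N N ℂ)
        + (Complex.I * ((Real.sin (t * ε) : ℝ) : ℂ) / (ε : ℂ)) • H := by
  rw [NormedSpace.exp_eq_tsum ℂ]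
  refine HasSum.tsum_eq ?_
  have hc : HasSum (fun m : ℕ => ((-1 : ℂ) ^ m * ((t * ε : ℝ) : ℂ) ^ (2 * m) / ((2 * m).factorial : ℂ)) •
      (1 : Matrix N N ℂ)) (((Real.cos (t * ε) : ℝ) : ℂ) • (1 : Matrix N N ℂ)) := by
    have := (Complex.hasSum_cos ((t * ε : ℝ) : ℂ)).smul_const (1 : Matrix N N ℂ)
    rwa [← Complex.ofReal_cos] at this
  have hs : HasSum (fun m : ℕ => (Complex.I *
      ((-1 : ℂ) ^ m * ((t * ε : ℝ) : ℂ) ^ (2 * m + 1) / ((2 * m + 1).factorial : ℂ)) / (ε : ℂ)) •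
      H) ((Complex.I * ((Real.sin (t * ε) : ℝ) : ℂ) / (ε : ℂ)) • H) := by
    have := (((Complex.hasSum_sin ((t * ε : ℝ) : ℂ)).mul_left Complex.I).div_const
      (ε : ℂ)).smul_const H
    rwa [← Complex.ofReal_sin] at this
  refine HasSum.even_add_odd ?_ ?_
  · convert hc using 2 with m
    · rfl
    rw [smul_pow, aux_pow_even H ε hH, smul_smul, smul_smul]
    congr 1
    have h1 : (Complex.I * (t : ℂ)) ^ (2 * m) * (ε : ℂ) ^ (2 * m)
        = (-1 : ℂ) ^ m * ((t * ε : ℝ) : ℂ) ^ (2 * m) := by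
      push_cast
      rw [← mul_pow, pow_mul, pow_mul, ← mul_pow]
      congr 1
      linear_combination ((t : ℂ) * (ε : ℂ)) ^ 2 * Complex.I_sq
    rw [← h1]
    field_simp
  · convert hs using 2 with m
    · rfl
    rw [smul_pow, aux_pow_odd H ε hH, smul_smul, smul_smul]
    congr 1
    have h2 : (Complex.I * (t : ℂ) * (ε : ℂ)) ^ 2 = (-1 : ℂ) * ((t : ℂ) * (ε : ℂ)) ^ 2 := by
      linear_combination ((t : ℂ) * (ε : ℂ)) ^ 2 * Complex.I_sq
    have h1 : (Complex.I * (t : ℂ)) ^ (2 * m + 1) * (ε : ℂ) ^ (2 * m + 1)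
        = Complex.I * ((-1 : ℂ) ^ m * ((t * ε : ℝ) : ℂ) ^ (2 * m + 1)) := by
      push_cast
      rw [← mul_pow]
      calc (Complex.I * (t : ℂ) * (ε : ℂ)) ^ (2 * m + 1)
          = ((Complex.I * (t : ℂ) * (ε : ℂ)) ^ 2) ^ m * (Complex.I * (t : ℂ) * (ε : ℂ)) := by
            rw [pow_succ, pow_mul]
        _ = ((-1 : ℂ) * ((t : ℂ) * (ε : ℂ)) ^ 2) ^ m * (Complex.I * (t : ℂ) * (ε : ℂ)) := by
            rw [h2]
        _ = Complex.I * ((-1 : ℂ) ^ m * ((t : ℂ) * (ε : ℂ)) ^ (2 * m + 1)) := by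
            rw [mul_pow]; ring
    have hε' : (ε : ℂ) ≠ 0 := Complex.ofReal_ne_zero.mpr hε
    have goal' : (((2 * m + 1).factorial : ℂ))⁻¹ * ((Complex.I * (t : ℂ)) ^ (2 * m + 1)
        * (ε : ℂ) ^ (2 * m)) * (ε : ℂ)
        = Complex.I * ((-1 : ℂ) ^ m * ((t * ε : ℝ) : ℂ) ^ (2 * m + 1)
          / ((2 * m + 1).factorial : ℂ)) := by
      linear_combination (((2 * m + 1).factorial : ℂ))⁻¹ * h1
    have hrw : Complex.I * ((-1 : ℂ) ^ m * ((t * ε : ℝ) : ℂ) ^ (2 * m + 1)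
          / ((2 * m + 1).factorial : ℂ) / (ε : ℂ))
        = Complex.I * ((-1 : ℂ) ^ m * ((t * ε : ℝ) : ℂ) ^ (2 * m + 1)
          / ((2 * m + 1).factorial : ℂ)) / (ε : ℂ) := by ring
    rw [eq_div_iff hε']
    linear_combination goal'

/-- Conjugation identity for `(a•1 + (I b/e)•H) O (a•1 - (I b/e)•H)`. -/
lemma conj_identity (H O : Matrix N N ℂ) (a b e : ℂ) (he : e ≠ 0)
    (hab : b ^ 2 = 1 - a ^ 2) :
    (a • (1 : Matrix N N ℂ) + (Complex.I * b / e) • H) * O *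
      (a • (1 : Matrix N N ℂ) - (Complex.I * b / e) • H) =
    ((1 / 2 : ℂ) • O + (1 / (2 * e ^ 2)) • (H * O * H))
      + (2 * a ^ 2 - 1) • ((1 / 2 : ℂ) • O - (1 / (2 * e ^ 2)) • (H * O * H))
      + (2 * b * a) • ((Complex.I / (2 * e)) • (H * O - O * H)) := by
  simp only [Matrix.add_mul, Matrix.mul_add, Matrix.sub_mul, Matrix.mul_sub, Matrix.smul_mul,
    Matrix.mul_smul, Matrix.one_mul, Matrix.mul_one, smul_sub, smul_add, smul_smul,
    ← Matrix.mul_assoc]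
  match_scalars <;> field_simp
  all_goals first
    | ring1
    | linear_combination (2 * e ^ 2) * hab + (-2 * b ^ 2 * e ^ 2) * Complex.I_sq
    | linear_combination 2 * hab + (-2 * b ^ 2) * Complex.I_sq

lemma real_smul_complex_smul (r : ℝ) (z : ℂ) (M : Matrix N N ℂ) :
    r • (z • M) = (((r : ℂ)) * z) • M := by
  rw [← smul_assoc, Complex.real_smul]

end Aux

/-- The two-site symbol `𝓗 = -(σ^x E(k/2)) ⊗ (σ^y (c·1 + iγs·σ^z))` of the XY chain squares to
`ε² • 1` and the time average of `e^{it𝓗} O e^{-it𝓗}` equals `O/2 + 𝓗O𝓗/(2ε²)`. -/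
theorem xy_symbol_time_average (γ k : ℝ)
    (hε : 0 < Real.cos (k / 2) ^ 2 + γ ^ 2 * Real.sin (k / 2) ^ 2) :
    let c : ℂ := (Real.cos (k / 2) : ℂ)
    let s : ℂ := (Real.sin (k / 2) : ℂ)
    let ε2 : ℝ := Real.cos (k / 2) ^ 2 + γ ^ 2 * Real.sin (k / 2) ^ 2
    let H : Matrix (Fin 2 × Fin 2) (Fin 2 × Fin 2) ℂ :=
      -((σx * Emat (k / 2)) ⊗ₖ (σy * (c • (1 : Matrix (Fin 2) (Fin 2) ℂ)
        + (Complex.I * (γ : ℂ) * s) • σz)))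
    (H * H = (ε2 : ℂ) • (1 : Matrix (Fin 2 × Fin 2) (Fin 2 × Fin 2) ℂ)) ∧
    ∀ O : Matrix (Fin 2 × Fin 2) (Fin 2 × Fin 2) ℂ,
      Tendsto (fun T : ℝ => (1 / T) •
          ∫ t in (0 : ℝ)..T,
            NormedSpace.exp ((Complex.I * (t : ℂ)) • H) * O *
              NormedSpace.exp ((-(Complex.I * (t : ℂ))) • H))
        atTop
        (nhds ((1 / 2 : ℂ) • O + (1 / (2 * (ε2 : ℂ))) • (H * O * H))) := by
  intro c s ε2 H
  -- part (i)
  have hA : (σx * Emat (k / 2)) * (σx * Emat (k / 2)) = 1 := by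
    ext i j
    fin_cases i <;> fin_cases j <;>
      simp [σx, Emat, Matrix.mul_apply, Fin.sum_univ_two, ← Complex.exp_add]
  have hB : (σy * (c • (1 : Matrix (Fin 2) (Fin 2) ℂ) + (Complex.I * (γ : ℂ) * s) • σz)) *
      (σy * (c • (1 : Matrix (Fin 2) (Fin 2) ℂ) + (Complex.I * (γ : ℂ) * s) • σz)) =
        (c ^ 2 + (γ : ℂ) ^ 2 * s ^ 2) • 1 := by
    ext i j
    fin_cases i <;> fin_cases j <;>
      simp only [σy, σz, Matrix.mul_apply, Fin.sum_univ_two, Matrix.add_apply,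
        Matrix.smul_apply, Matrix.one_apply, Matrix.cons_val', Matrix.cons_val_zero,
        Matrix.cons_val_one, Matrix.head_cons, Matrix.head_fin_const, Matrix.empty_val',
        Matrix.cons_val_fin_one, smul_eq_mul] <;>
      norm_num <;>
      linear_combination ((γ : ℂ) ^ 2 * s ^ 2 * Complex.I ^ 2 - (c ^ 2 + (γ : ℂ) ^ 2 * s ^ 2)) *
        Complex.I_sq
  have hHH : H * H = (ε2 : ℂ) • (1 : Matrix (Fin 2 × Fin 2) (Fin 2 × Fin 2) ℂ) := by
    show (-(_ ⊗ₖ _)) * (-(_ ⊗ₖ _)) = _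
    rw [neg_mul_neg, ← Matrix.mul_kronecker_mul, hA, hB, Matrix.kronecker_smul,
      Matrix.one_kronecker_one]
    congr 1
    show ((Real.cos (k / 2) : ℝ) : ℂ) ^ 2 + (γ : ℂ) ^ 2 * ((Real.sin (k / 2) : ℝ) : ℂ) ^ 2
      = ((ε2 : ℝ) : ℂ)
    push_cast [ε2]
    ring
  refine ⟨hHH, ?_⟩
  intro O
  set ε : ℝ := Real.sqrt ε2 with hεdef
  have hε2pos : 0 < ε2 := hε
  have hεpos : 0 < ε := Real.sqrt_pos.mpr hε2pos
  have hsq : ((ε : ℝ) : ℂ) ^ 2 = ((ε2 : ℝ) : ℂ) := by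
    norm_cast
    exact Real.sq_sqrt hε2pos.le
  have hHsq : H * H = ((ε : ℂ) ^ 2) • 1 := by rw [hsq]; exact hHH
  have hexp := exp_smul_of_sq H ε hεpos.ne' hHsq
  have hexpneg : ∀ t : ℝ, NormedSpace.exp ((-(Complex.I * (t : ℂ))) • H)
      = ((Real.cos (t * ε) : ℝ) : ℂ) • (1 : Matrix (Fin 2 × Fin 2) (Fin 2 × Fin 2) ℂ)
        - (Complex.I * ((Real.sin (t * ε) : ℝ) : ℂ) / (ε : ℂ)) • H := by
    intro t
    have h := exp_smul_of_sq H ε hεpos.ne' hHsq (-t)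
    have harg : (Complex.I * ((-t : ℝ) : ℂ)) • H = (-(Complex.I * (t : ℂ))) • H := by
      push_cast; ring_nf
    rw [harg] at h
    rw [h, neg_mul, Real.cos_neg, Real.sin_neg]
    push_cast
    rw [sub_eq_add_neg]
    congr 1
    rw [← neg_smul]
    congr 1
    ring
  set B : Matrix (Fin 2 × Fin 2) (Fin 2 × Fin 2) ℂ :=
    (1 / 2 : ℂ) • O - (1 / (2 * ((ε2 : ℝ) : ℂ))) • (H * O * H) with hBdef
  set C : Matrix (Fin 2 × Fin 2) (Fin 2 × Fin 2) ℂ :=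
    (Complex.I / (2 * (ε : ℂ))) • (H * O - O * H) with hCdef
  set tgt : Matrix (Fin 2 × Fin 2) (Fin 2 × Fin 2) ℂ :=
    (1 / 2 : ℂ) • O + (1 / (2 * ((ε2 : ℝ) : ℂ))) • (H * O * H) with htgtdef
  have hεC : (ε : ℂ) ≠ 0 := Complex.ofReal_ne_zero.mpr hεpos.ne'
  have key : ∀ t : ℝ,
      NormedSpace.exp ((Complex.I * (t : ℂ)) • H) * O *
        NormedSpace.exp ((-(Complex.I * (t : ℂ))) • H)
      = tgt + ((Real.cos (2 * (t * ε)) : ℝ) : ℂ) • B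
          + ((Real.sin (2 * (t * ε)) : ℝ) : ℂ) • C := by
    intro t
    rw [hexp t, hexpneg t, Real.cos_two_mul, Real.sin_two_mul]
    have hab : ((Real.sin (t * ε) : ℝ) : ℂ) ^ 2 = 1 - ((Real.cos (t * ε) : ℝ) : ℂ) ^ 2 := by
      norm_cast
      exact Real.sin_sq (t * ε)
    have hmain := conj_identity H O ((Real.cos (t * ε) : ℝ) : ℂ)
      ((Real.sin (t * ε) : ℝ) : ℂ) (ε : ℂ) hεC hab
    rw [hmain, hBdef, hCdef, htgtdef, hsq]
    push_cast
    ring_nf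
  -- the scalar antiderivatives
  have h2ε : (2 * ε) ≠ 0 := by positivity
  have hc : ∀ T : ℝ, (∫ t in (0:ℝ)..T, ((Real.cos (2 * (t * ε)) : ℝ) : ℂ))
      = ((Real.sin (T * (2 * ε)) / (2 * ε) : ℝ) : ℂ) := by
    intro T
    rw [intervalIntegral.integral_ofReal]
    norm_cast
    have harg : (fun t : ℝ => Real.cos (2 * (t * ε))) = fun t : ℝ => Real.cos (t * (2 * ε)) := by
      funext t; ring_nf
    rw [harg, intervalIntegral.integral_comp_mul_right (fun x => Real.cos x) h2ε]
    simp [integral_cos, smul_eq_mul]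
    ring
  have hs : ∀ T : ℝ, (∫ t in (0:ℝ)..T, ((Real.sin (2 * (t * ε)) : ℝ) : ℂ))
      = (((1 - Real.cos (T * (2 * ε))) / (2 * ε) : ℝ) : ℂ) := by
    intro T
    rw [intervalIntegral.integral_ofReal]
    norm_cast
    have harg : (fun t : ℝ => Real.sin (2 * (t * ε))) = fun t : ℝ => Real.sin (t * (2 * ε)) := by
      funext t; ring_nf
    rw [harg, intervalIntegral.integral_comp_mul_right (fun x => Real.sin x) h2ε]
    simp [integral_sin, smul_eq_mul]
    ring
  letI : ENormedAddMonoid (Matrix (Fin 2 × Fin 2) (Fin 2 × Fin 2) ℂ) :=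
    NormedAddGroup.toENormedAddMonoid
  have hintc : ∀ T : ℝ, IntervalIntegrable
      (fun t : ℝ => ((Real.cos (2 * (t * ε)) : ℝ) : ℂ) • B) MeasureTheory.volume 0 T := by
    intro T
    exact (Continuous.smul (show Continuous (fun t : ℝ => ((Real.cos (2 * (t * ε)) : ℝ) : ℂ)) by
      fun_prop) continuous_const).intervalIntegrable 0 T
  have hints : ∀ T : ℝ, IntervalIntegrable
      (fun t : ℝ => ((Real.sin (2 * (t * ε)) : ℝ) : ℂ) • C) MeasureTheory.volume 0 T := by
    intro T
    exact (Continuous.smul (show Continuous (fun t : ℝ => ((Real.sin (2 * (t * ε)) : ℝ) : ℂ)) by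
      fun_prop) continuous_const).intervalIntegrable 0 T
  have hint : ∀ T : ℝ,
      (∫ t in (0:ℝ)..T, NormedSpace.exp ((Complex.I * (t : ℂ)) • H) * O *
          NormedSpace.exp ((-(Complex.I * (t : ℂ))) • H))
      = T • tgt + ((Real.sin (T * (2 * ε)) / (2 * ε) : ℝ) : ℂ) • B
          + (((1 - Real.cos (T * (2 * ε))) / (2 * ε) : ℝ) : ℂ) • C := by
    intro T
    rw [intervalIntegral.integral_congr (g := fun t =>
      tgt + ((Real.cos (2 * (t * ε)) : ℝ) : ℂ) • B + ((Real.sin (2 * (t * ε)) : ℝ) : ℂ) • C)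
      (fun t _ => key t)]
    rw [intervalIntegral.integral_add
        ((intervalIntegrable_const).add (hintc T)) (hints T),
      intervalIntegral.integral_add (intervalIntegrable_const) (hintc T),
      intervalIntegral.integral_const, intervalIntegral.integral_smul_const,
      intervalIntegral.integral_smul_const, hc T, hs T]
    rw [sub_zero]
  -- eventual form
  have heq : ∀ᶠ T : ℝ in atTop, (1 / T) • (∫ t in (0:ℝ)..T,
        NormedSpace.exp ((Complex.I * (t : ℂ)) • H) * O *
          NormedSpace.exp ((-(Complex.I * (t : ℂ))) • H))
      = tgt + ((Real.sin (T * (2 * ε)) / (2 * ε) / T : ℝ) : ℂ) • B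
          + (((1 - Real.cos (T * (2 * ε))) / (2 * ε) / T : ℝ) : ℂ) • C := by
    filter_upwards [eventually_gt_atTop (0 : ℝ)] with T hT
    rw [hint T, smul_add, smul_add, smul_smul, one_div_mul_cancel hT.ne', one_smul,
      real_smul_complex_smul, real_smul_complex_smul]
    congr 2
    · push_cast; ring
    · push_cast; ring
  have heq' : (fun T : ℝ => (1 / T) • (∫ t in (0:ℝ)..T,
        NormedSpace.exp ((Complex.I * (t : ℂ)) • H) * O *
          NormedSpace.exp ((-(Complex.I * (t : ℂ))) • H)))
      =ᶠ[atTop] (fun T : ℝ => tgt + ((Real.sin (T * (2 * ε)) / (2 * ε) / T : ℝ) : ℂ) • B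
          + (((1 - Real.cos (T * (2 * ε))) / (2 * ε) / T : ℝ) : ℂ) • C) := heq
  have hbound : Tendsto (fun T : ℝ => 2 / (2 * ε) / T) atTop (nhds 0) := by
    have := tendsto_inv_atTop_zero.const_mul (2 / (2 * ε))
    simpa [div_eq_mul_inv] using this
  have hu : Tendsto (fun T : ℝ => Real.sin (T * (2 * ε)) / (2 * ε) / T) atTop (nhds 0) := by
    refine squeeze_zero_norm' ?_ hbound
    filter_upwards [eventually_gt_atTop (0 : ℝ)] with T hT
    have h2 : (0:ℝ) < 2 * ε := by positivity
    rw [Real.norm_eq_abs, abs_div, abs_div, abs_of_pos hT, abs_of_pos h2]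
    gcongr
    exact abs_le.mpr ⟨Real.neg_one_le_sin _, Real.sin_le_one _⟩ |>.trans (by norm_num)
  have hv : Tendsto (fun T : ℝ => (1 - Real.cos (T * (2 * ε))) / (2 * ε) / T) atTop (nhds 0) := by
    refine squeeze_zero_norm' ?_ hbound
    filter_upwards [eventually_gt_atTop (0 : ℝ)] with T hT
    have h2 : (0:ℝ) < 2 * ε := by positivity
    rw [Real.norm_eq_abs, abs_div, abs_div, abs_of_pos hT, abs_of_pos h2]
    gcongr
    exact abs_le.mpr ⟨by nlinarith [Real.cos_le_one (T * (2 * ε))],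
      by nlinarith [Real.neg_one_le_cos (T * (2 * ε))]⟩
  have huC : Tendsto (fun T : ℝ => ((Real.sin (T * (2 * ε)) / (2 * ε) / T : ℝ) : ℂ))
      atTop (nhds 0) := by
    have := (Complex.continuous_ofReal.tendsto 0).comp hu
    simpa only [Function.comp_def, Complex.ofReal_zero] using this
  have hvC : Tendsto (fun T : ℝ => (((1 - Real.cos (T * (2 * ε))) / (2 * ε) / T : ℝ) : ℂ))
      atTop (nhds 0) := by
    have := (Complex.continuous_ofReal.tendsto 0).comp hv
    simpa only [Function.comp_def, Complex.ofReal_zero] using this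
  have hg : Tendsto (fun T : ℝ => tgt + ((Real.sin (T * (2 * ε)) / (2 * ε) / T : ℝ) : ℂ) • B
        + (((1 - Real.cos (T * (2 * ε))) / (2 * ε) / T : ℝ) : ℂ) • C)
      atTop (nhds (tgt + (0 : ℂ) • B + (0 : ℂ) • C)) :=
    (tendsto_const_nhds.add (huC.smul_const B)).add (hvC.smul_const C)
  simp only [zero_smul, add_zero] at hg
  exact hg.congr' heq'.symm
end

section
/- Let γ, k ∈ ℝ and write c = cos(k/2), s = sin(k/2). Let σ^x, σ^y, σ^z be the Pauli matrices, E(a) = diag(e^{ia}, e^{−ia}), and define B = σ^y·(c·1 + iγ s·σ^z) and C = σ^x·(c·1 + iγ s·σ^z). Define the 4×4 complex matrices (Kronecker products): 𝒬₁ = (σ^x E(k/2)) ⊗ B, 𝒬₂ = c · (1₂ ⊗ B), 𝒬₃ = sin(k) • 1₄, 𝒬₄ = s · ((σ^x E(k/2)) ⊗ 1₂), 𝒬₅ = (σ^y E(k/2)) ⊗ C, 𝒬₆ = c · ((σ^y E(k/2)) ⊗ σ^z), 𝒬₇ = sin(k) · (σ^z ⊗ σ^z), 𝒬₈ = s ·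 (σ^z ⊗ C). Then 𝒬₁ commutes with every 𝒬_j for j = 1,…,8, i.e. 𝒬₁𝒬_j = 𝒬_j𝒬₁ for all j. -/
open Matrix Complex
open scoped Matrix Kronecker

/-- The two-site symbols `𝒬₁,…,𝒬₈` of the (quasi-)local conservation laws of the XY model. -/
noncomputable def Qmat (γ k : ℝ) : Fin 8 → Matrix (Fin 2 × Fin 2) (Fin 2 × Fin 2) ℂ :=
  let c : ℂ := (Real.cos (k / 2) : ℂ)
  let s : ℂ := (Real.sin (k / 2) : ℂ)
  let B : Matrix (Fin 2) (Fin 2) ℂ :=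
    σy * (c • (1 : Matrix (Fin 2) (Fin 2) ℂ) + (Complex.I * (γ : ℂ) * s) • σz)
  let C : Matrix (Fin 2) (Fin 2) ℂ :=
    σx * (c • (1 : Matrix (Fin 2) (Fin 2) ℂ) + (Complex.I * (γ : ℂ) * s) • σz)
  ![ (σx * Emat (k / 2)) ⊗ₖ B,
     c • ((1 : Matrix (Fin 2) (Fin 2) ℂ) ⊗ₖ B),
     ((Real.sin k : ℂ)) • (1 : Matrix (Fin 2 × Fin 2) (Fin 2 × Fin 2) ℂ),
     s • ((σx * Emat (k / 2)) ⊗ₖ (1 : Matrix (Fin 2) (Fin 2) ℂ)),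
     (σy * Emat (k / 2)) ⊗ₖ C,
     c • ((σy * Emat (k / 2)) ⊗ₖ σz),
     ((Real.sin k : ℂ)) • (σz ⊗ₖ σz),
     s • (σz ⊗ₖ C) ]


private lemma L1 (p q : ℂ) :
    (σx * !![p,0;0,q]) * (σy * !![p,0;0,q]) = -((σy * !![p,0;0,q]) * (σx * !![p,0;0,q])) := by
  ext i j; fin_cases i <;> fin_cases j <;> simp [σx, σy, mul_apply, Fin.sum_univ_two] <;> ring

private lemma L2 (p q : ℂ) : (σx * !![p,0;0,q]) * σz = -(σz * (σx * !![p,0;0,q])) := by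
  ext i j; fin_cases i <;> fin_cases j <;> simp [σx, σz, mul_apply, Fin.sum_univ_two]

private lemma L3 (p q : ℂ) : (σy * !![p,0;0,q]) * σz = -(σz * (σy * !![p,0;0,q])) := by
  ext i j; fin_cases i <;> fin_cases j <;> simp [σy, σz, mul_apply, Fin.sum_univ_two]

private lemma Ldiag (c w : ℂ) : c • (1 : Matrix (Fin 2) (Fin 2) ℂ) + w • σz = !![c+w,0;0,c-w] := by
  ext i j; fin_cases i <;> fin_cases j <;> simp [σz, Matrix.one_apply] <;> ring

private lemma kron_comm {A A' B B' : Matrix (Fin 2) (Fin 2) ℂ}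
    (hA : A * A' = A' * A) (hB : B * B' = B' * B) :
    (A ⊗ₖ B) * (A' ⊗ₖ B') = (A' ⊗ₖ B') * (A ⊗ₖ B) := by
  rw [← Matrix.mul_kronecker_mul, ← Matrix.mul_kronecker_mul, hA, hB]

private lemma kron_anticomm {A A' B B' : Matrix (Fin 2) (Fin 2) ℂ}
    (hA : A * A' = -(A' * A)) (hB : B * B' = -(B' * B)) :
    (A ⊗ₖ B) * (A' ⊗ₖ B') = (A' ⊗ₖ B') * (A ⊗ₖ B) := by
  have hneg : ∀ X Y : Matrix (Fin 2) (Fin 2) ℂ, (-X) ⊗ₖ (-Y) = X ⊗ₖ Y := by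
    intro X Y; ext ⟨a, b⟩ ⟨c, d⟩; simp [Matrix.kronecker_apply]
  rw [← Matrix.mul_kronecker_mul, ← Matrix.mul_kronecker_mul, hA, hB, hneg]

private lemma smul_comm_right {n : Type*} [Fintype n] [DecidableEq n]
    {P Q : Matrix n n ℂ} (r : ℂ) (h : P * Q = Q * P) : P * (r • Q) = (r • Q) * P := by
  rw [Matrix.mul_smul, Matrix.smul_mul, h]

/-- `𝒬₁` commutes with every `𝒬_j`, `j = 1,…,8`. -/
theorem Q1_commutes (γ k : ℝ) (j : Fin 8) :
    Qmat γ k 0 * Qmat γ k j = Qmat γ k j * Qmat γ k 0 := by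
  have hE : Emat (k / 2) =
      !![Complex.exp (Complex.I * ((k/2 : ℝ) : ℂ)), 0; 0,
         Complex.exp (-(Complex.I * ((k/2 : ℝ) : ℂ)))] := rfl
  set c : ℂ := (Real.cos (k / 2) : ℂ) with hc
  set s : ℂ := (Real.sin (k / 2) : ℂ) with hs
  have hM : c • (1 : Matrix (Fin 2) (Fin 2) ℂ) + (Complex.I * (γ : ℂ) * s) • σz =
      !![c + Complex.I * (γ : ℂ) * s, 0; 0, c - Complex.I * (γ : ℂ) * s] := Ldiag _ _
  fin_cases j
  · rfl
  · -- Q2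
    show _ * (c • _) = (c • _) * _
    refine smul_comm_right c (kron_comm ?_ ?_)
    · rw [mul_one, one_mul]
    · rfl
  · -- Q3 : scalar multiple of identity
    show Qmat γ k 0 * (((Real.sin k : ℂ)) • (1 : Matrix (Fin 2 × Fin 2) (Fin 2 × Fin 2) ℂ)) =
      (((Real.sin k : ℂ)) • (1 : Matrix (Fin 2 × Fin 2) (Fin 2 × Fin 2) ℂ)) * Qmat γ k 0
    rw [Matrix.mul_smul, Matrix.smul_mul, mul_one, one_mul]
  · -- Q4
    show _ * (s • _) = (s • _) * _
    exact smul_comm_right s (kron_comm rfl (by rw [mul_one, one_mul]))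
  · -- Q5
    refine kron_anticomm ?_ ?_
    · rw [hE]; exact L1 _ _
    · rw [hM, L1 (c + Complex.I * (γ : ℂ) * s) (c - Complex.I * (γ : ℂ) * s), neg_neg]
  · -- Q6
    show _ * (c • _) = (c • _) * _
    refine smul_comm_right c (kron_anticomm ?_ ?_)
    · rw [hE]; exact L1 _ _
    · rw [hM]; exact L3 _ _
  · -- Q7
    show _ * (((Real.sin k : ℂ)) • _) = (((Real.sin k : ℂ)) • _) * _
    refine smul_comm_right _ (kron_anticomm ?_ ?_)
    · rw [hE]; exact L2 _ _
    · rw [hM]; exact L3 _ _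
  · -- Q8
    show _ * (s • _) = (s • _) * _
    refine smul_comm_right s (kron_anticomm ?_ ?_)
    · rw [hE]; exact L2 _ _
    · rw [hM, L1 (c + Complex.I * (γ : ℂ) * s) (c - Complex.I * (γ : ℂ) * s), neg_neg]
end

section
/- Let g̃, λ ∈ ℝ and let m : ℝ → ℝ be a continuous function with |m(k)| ≤ 1 for all k. Then there exists h ∈ ℝ, with |h − g̃| ≤ 2|λ|, satisfying the self-consistency equation h = g̃ + 2λ · (1/2π) ∫_{−π}^{π} m(k) · (h − cos k)/√(1 + h² − 2h cos k) dk. -/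
open MeasureTheory Set

/-- Existence of a solution `h` of the self-consistency equation
`h = g̃ + 2λ (1/2π) ∫_{-π}^{π} m(k) (h - cos k)/√(1 + h² - 2h cos k) dk`,
with `|h - g̃| ≤ 2|λ|`, for any continuous `m` with `|m| ≤ 1`. -/
theorem selfconsistency_solution (lam gt : ℝ) (m : ℝ → ℝ)
    (hm : Continuous m) (hm1 : ∀ k : ℝ, |m k| ≤ 1) :
    ∃ h : ℝ, |h - gt| ≤ 2 * |lam| ∧
      h = gt + 2 * lam * ((1 / (2 * Real.pi)) *
        ∫ k in (-Real.pi)..Real.pi,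
          m k * (h - Real.cos k) / Real.sqrt (1 + h ^ 2 - 2 * h * Real.cos k)) := by
  have hpi : (0:ℝ) < Real.pi := Real.pi_pos
  set f : ℝ → ℝ → ℝ := fun h k =>
    m k * (h - Real.cos k) / Real.sqrt (1 + h ^ 2 - 2 * h * Real.cos k) with hfdef
  -- pointwise bound |f h k| ≤ 1
  have hbound : ∀ h k, |f h k| ≤ 1 := by
    intro h k
    have hDnn : (h - Real.cos k) ^ 2 ≤ 1 + h ^ 2 - 2 * h * Real.cos k := by
      nlinarith [Real.sin_sq_add_cos_sq k, sq_nonneg (Real.sin k)]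
    have hs : |h - Real.cos k| ≤ Real.sqrt (1 + h ^ 2 - 2 * h * Real.cos k) := by
      rw [← Real.sqrt_sq_eq_abs]
      exact Real.sqrt_le_sqrt hDnn
    have hnum : |m k * (h - Real.cos k)| ≤ Real.sqrt (1 + h ^ 2 - 2 * h * Real.cos k) := by
      rw [abs_mul]
      calc |m k| * |h - Real.cos k| ≤ 1 * |h - Real.cos k| :=
            mul_le_mul_of_nonneg_right (hm1 k) (abs_nonneg _)
        _ = |h - Real.cos k| := one_mul _
        _ ≤ _ := hs
    rw [hfdef]
    simp only [abs_div, abs_of_nonneg (Real.sqrt_nonneg _)]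
    exact div_le_one_of_le₀ hnum (Real.sqrt_nonneg _)
  -- measurability in k
  have hmeas : ∀ h : ℝ, Measurable (f h) := by
    intro h
    apply Measurable.div
    · exact (hm.mul (continuous_const.sub Real.continuous_cos)).measurable
    · exact (Real.continuous_sqrt.comp (by continuity)).measurable
  -- the zero set of sin is null
  have hS : volume {k : ℝ | Real.sin k = 0} = 0 := by
    have hsub : {k : ℝ | Real.sin k = 0} ⊆ Set.range (fun n : ℤ => (n : ℝ) * Real.pi) := by
      intro k hk
      obtain ⟨n, hn⟩ := Real.sin_eq_zero_iff.mp hk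
      exact ⟨n, hn⟩
    exact measure_mono_null hsub ((Set.countable_range _).measure_zero _)
  -- a.e. continuity in h
  have hcont : ∀ᵐ k ∂(volume.restrict (Set.Ioc (-Real.pi) Real.pi)),
      Continuous fun h => f h k := by
    refine ae_restrict_of_ae ?_
    have : ∀ᵐ k : ℝ, Real.sin k ≠ 0 := by
      rw [MeasureTheory.ae_iff]
      simpa using hS
    filter_upwards [this] with k hk
    have hD : ∀ h : ℝ, 0 < 1 + h ^ 2 - 2 * h * Real.cos k := by
      intro h
      have hs2 : 0 < Real.sin k ^ 2 := by positivity
      nlinarith [Real.sin_sq_add_cos_sq k, sq_nonneg (h - Real.cos k)]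
    apply Continuous.div
    · exact continuous_const.mul (continuous_id.sub continuous_const)
    · exact Real.continuous_sqrt.comp (by continuity)
    · intro h
      exact (Real.sqrt_pos.mpr (hD h)).ne'
  -- integrable bound
  have hintbd : Integrable (fun _ : ℝ => (1:ℝ))
      (volume.restrict (Set.Ioc (-Real.pi) Real.pi)) := by
    apply (integrableOn_const_iff (C := (1:ℝ))).mpr
    right
    exact measure_Ioc_lt_top
  -- continuity of the integral
  have hΦ : Continuous fun h : ℝ => ∫ k in Set.Ioc (-Real.pi) Real.pi, f h k := by
    apply MeasureTheory.continuous_of_dominated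
    · intro h; exact (hmeas h).aestronglyMeasurable
    · intro h
      exact Filter.Eventually.of_forall fun k => by
        simpa [Real.norm_eq_abs] using hbound h k
    · exact hintbd
    · exact hcont
  -- integral bound
  have hvol : (volume (Set.Ioc (-Real.pi) Real.pi)).toReal = 2 * Real.pi := by
    rw [Real.volume_Ioc, ENNReal.toReal_ofReal (by linarith)]
    ring
  have hΦbd : ∀ h : ℝ, |∫ k in Set.Ioc (-Real.pi) Real.pi, f h k| ≤ 2 * Real.pi := by
    intro h
    have hint : Integrable (f h) (volume.restrict (Set.Ioc (-Real.pi) Real.pi)) := by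
      apply hintbd.mono' (hmeas h).aestronglyMeasurable
      exact Filter.Eventually.of_forall fun k => by
        simpa [Real.norm_eq_abs] using hbound h k
    calc |∫ k in Set.Ioc (-Real.pi) Real.pi, f h k|
        ≤ ∫ k in Set.Ioc (-Real.pi) Real.pi, |f h k| := by
          simpa [Real.norm_eq_abs] using
            norm_integral_le_integral_norm (μ := volume.restrict (Set.Ioc (-Real.pi) Real.pi)) (f h)
      _ ≤ ∫ _ in Set.Ioc (-Real.pi) Real.pi, (1:ℝ) :=
          integral_mono hint.abs hintbd fun k => hbound h k
      _ = 2 * Real.pi := by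
          rw [setIntegral_const, measureReal_def, hvol, smul_eq_mul]; ring
  -- define the self-consistency map
  set F : ℝ → ℝ := fun h => gt + 2 * lam *
    ((1 / (2 * Real.pi)) * ∫ k in Set.Ioc (-Real.pi) Real.pi, f h k) with hFdef
  have hFcont : Continuous F := by
    apply continuous_const.add
    exact continuous_const.mul (continuous_const.mul hΦ)
  have hFbd : ∀ h : ℝ, |F h - gt| ≤ 2 * |lam| := by
    intro h
    have : F h - gt = 2 * lam * ((1 / (2 * Real.pi)) *
        ∫ k in Set.Ioc (-Real.pi) Real.pi, f h k) := by rw [hFdef]; ring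
    rw [this]
    have h1 : |1 / (2 * Real.pi)| = 1 / (2 * Real.pi) := abs_of_pos (by positivity)
    have h3 : (1 / (2 * Real.pi)) * (2 * Real.pi) = 1 := by field_simp
    have key : |(1 / (2 * Real.pi)) * ∫ k in Set.Ioc (-Real.pi) Real.pi, f h k| ≤ 1 := by
      rw [abs_mul, h1]
      calc (1 / (2 * Real.pi)) * |∫ k in Set.Ioc (-Real.pi) Real.pi, f h k|
          ≤ (1 / (2 * Real.pi)) * (2 * Real.pi) :=
            mul_le_mul_of_nonneg_left (hΦbd h) (by positivity)
        _ = 1 := h3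
    calc |2 * lam * ((1 / (2 * Real.pi)) * ∫ k in Set.Ioc (-Real.pi) Real.pi, f h k)|
        = |2 * lam| * |(1 / (2 * Real.pi)) * ∫ k in Set.Ioc (-Real.pi) Real.pi, f h k| :=
          abs_mul _ _
      _ ≤ |2 * lam| * 1 := mul_le_mul_of_nonneg_left key (abs_nonneg _)
      _ = 2 * |lam| := by rw [mul_one, abs_mul, abs_two]
  -- IVT
  set a := gt - 2 * |lam| with ha
  set b := gt + 2 * |lam| with hb
  have hab : a ≤ b := by
    have := abs_nonneg lam; rw [ha, hb]; linarith
  have hGa : 0 ≤ F a - a := by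
    have := hFbd a
    rw [abs_le] at this
    rw [ha]; linarith [this.1]
  have hGb : F b - b ≤ 0 := by
    have := hFbd b
    rw [abs_le] at this
    rw [hb]; linarith [this.2]
  have hGcont : ContinuousOn (fun h => F h - h) (Set.Icc a b) :=
    (hFcont.sub continuous_id).continuousOn
  have h0 : (0:ℝ) ∈ Set.Icc (F b - b) (F a - a) := ⟨hGb, hGa⟩
  obtain ⟨h, hhmem, hheq⟩ := intermediate_value_Icc' hab hGcont h0
  refine ⟨h, ?_, ?_⟩
  · rw [abs_le]
    constructor
    · rw [ha] at hhmem; linarith [hhmem.1]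
    · rw [hb] at hhmem; linarith [hhmem.2]
  · have hFh : F h = h := by simpa [sub_eq_zero] using hheq
    have hconv : (∫ k in (-Real.pi)..Real.pi,
        m k * (h - Real.cos k) / Real.sqrt (1 + h ^ 2 - 2 * h * Real.cos k))
        = ∫ k in Set.Ioc (-Real.pi) Real.pi, f h k := by
      rw [intervalIntegral.integral_of_le (by linarith)]
    rw [hconv]
    nth_rewrite 1 [← hFh]
    rfl
end

section
/- Let h, k, m ∈ ℝ with 1 + h² − 2h·cos k > 0, set r = √(1 + h² − 2h·cos k), and define the 2×2 complex matrix Γ = −(m/r) • ((h − cos k)·σ^y + (sin k)·σ^x). Then: (i) Tr[Γ·σ^y] = −2m(h − cos k)/r; (ii) Tr[Γ·σ^y·E(k)] = −2m(h·cos k − 1)/r, where E(k) = diag(e^{ik}, e^{−ik}) = e^{ikσ^z}; and consequently (iii) (h − cos k)·Tr[Γ·σ^y·E(k)] = (h·cos k − 1)·Tr[Γ·σ^y]. -/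
open Matrix

/-- Trace identities for the symbol `Γ_m(k)` of the stationary states of the nonlocal Ising
Hamiltonian; (iii) is the stationarity condition of the self-consistent mean-field equations. -/
theorem stationary_symbol_traces (h k m : ℝ)
    (hpos : 0 < 1 + h ^ 2 - 2 * h * Real.cos k) :
    let r : ℝ := Real.sqrt (1 + h ^ 2 - 2 * h * Real.cos k)
    let Γ : Matrix (Fin 2) (Fin 2) ℂ :=
      (-(m / r : ℝ) : ℂ) • (((h - Real.cos k : ℝ) : ℂ) • σy + ((Real.sin k : ℝ) : ℂ) • σx)
    Matrix.trace (Γ * σy) = ((-2 * m * (h - Real.cos k) / r : ℝ) : ℂ) ∧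
    Matrix.trace (Γ * σy * Emat k) = ((-2 * m * (h * Real.cos k - 1) / r : ℝ) : ℂ) ∧
    ((h - Real.cos k : ℝ) : ℂ) * Matrix.trace (Γ * σy * Emat k)
      = ((h * Real.cos k - 1 : ℝ) : ℂ) * Matrix.trace (Γ * σy) := by
  intro r Γ
  have he : Complex.exp (Complex.I * (k : ℂ)) = Complex.cos k + Complex.sin k * Complex.I := by
    rw [mul_comm, Complex.exp_mul_I]
  have he' : Complex.exp (-(Complex.I * (k : ℂ))) = Complex.cos k - Complex.sin k * Complex.I := by
    rw [show -(Complex.I * (k:ℂ)) = (-(k:ℂ)) * Complex.I by ring, Complex.exp_mul_I,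
      Complex.cos_neg, Complex.sin_neg]
    ring
  have h1 : Matrix.trace (Γ * σy) = ((-2 * m * (h - Real.cos k) / r : ℝ) : ℂ) := by
    simp only [Γ, σx, σy, smul_add, Matrix.add_mul, Matrix.smul_mul, Matrix.mul_fin_two,
      Matrix.smul_of, Matrix.smul_cons, Matrix.smul_empty, Matrix.trace_fin_two_of,
      smul_eq_mul, Matrix.of_add_of, Matrix.add_cons, Matrix.head_cons, Matrix.tail_cons,
      Matrix.empty_add_empty, Matrix.cons_val_zero, Matrix.cons_val_one]
    push_cast
    ring_nf
    simp only [Complex.I_sq]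
    ring
  have h2 : Matrix.trace (Γ * σy * Emat k) = ((-2 * m * (h * Real.cos k - 1) / r : ℝ) : ℂ) := by
    simp only [Γ, σx, σy, Emat, smul_add, Matrix.add_mul, Matrix.smul_mul, Matrix.mul_fin_two,
      Matrix.smul_of, Matrix.smul_cons, Matrix.smul_empty, Matrix.trace_fin_two_of,
      smul_eq_mul, Matrix.of_add_of, Matrix.add_cons, Matrix.head_cons, Matrix.tail_cons,
      Matrix.empty_add_empty, Matrix.cons_val_zero, Matrix.cons_val_one, he, he']
    push_cast
    ring_nf
    simp only [Complex.I_sq]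
    linear_combination (2 * m / (r : ℂ)) * Complex.sin_sq_add_cos_sq (k : ℂ)
  refine ⟨h1, h2, ?_⟩
  rw [h1, h2]
  push_cast
  ring
end
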